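/- arXiv:1307.3621 — 2 statements merged into one kernel-verified Lean document; each statement's English description precedes it below -/
import Mathlib

section
/- Suppose p₁ ≥ p₂ ≥ ... ≥ p_n and w is a feasible solution with w_i < w_{i+1} for some i. Then the vector w' obtained by swapping coordinates w_i and w_{i+1} is feasible and satisfies Pr[w'·X ≥ θ] ≥ Pr[w·X ≥ θ]. -/
open Finset

noncomputable def cubeProb {n : ℕ} (p : Fin n → ℝ) (x : Fin n → Bool) : ℝ :=
  ∏ i, if x i then p i else 1 - p i

noncomputable def Obj {n : ℕ} (p : Fin n → ℝ) (w : Fin n → ℝ) (θ : ℝ) : ℝ :=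
  ∑ x ∈ Finset.univ.filter
      (fun x : Fin n → Bool => θ ≤ ∑ i, w i * (if x i then 1 else 0)),
    cubeProb p x

lemma swap_comp_self {n : ℕ} (i j : Fin n) (x : Fin n → Bool) :
    (x ∘ Equiv.swap i j) ∘ Equiv.swap i j = x := by
  funext k; simp [Function.comp, Equiv.swap_apply_self]

/-- cubeProb increases when we swap a `false` at `i` with a `true` at `j`,
provided `p j ≤ p i`. -/
lemma cube_swap_le {n : ℕ} (p : Fin n → ℝ) (hp : ∀ i, p i ∈ Set.Icc (0:ℝ) 1)
    (i j : Fin n) (hne : i ≠ j) (hpj : p j ≤ p i)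
    (x : Fin n → Bool) (hxi : x i = false) (hxj : x j = true) :
    cubeProb p x ≤ cubeProb p (x ∘ Equiv.swap i j) := by
  unfold cubeProb
  have hjmem : j ∈ Finset.univ.erase i := Finset.mem_erase.2 ⟨hne.symm, mem_univ j⟩
  have expand : ∀ y : Fin n → Bool,
      (∏ k, if y k then p k else 1 - p k) =
        (if y i then p i else 1 - p i) * ((if y j then p j else 1 - p j) *
          ∏ k ∈ (Finset.univ.erase i).erase j, if y k then p k else 1 - p k) := by
    intro y
    rw [← Finset.mul_prod_erase _ _ (mem_univ i), ← Finset.mul_prod_erase _ _ hjmem]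
  rw [expand, expand]
  have htail : (∏ k ∈ (Finset.univ.erase i).erase j,
      if (x ∘ Equiv.swap i j) k then p k else 1 - p k) =
      ∏ k ∈ (Finset.univ.erase i).erase j, if x k then p k else 1 - p k := by
    apply Finset.prod_congr rfl
    intro k hk
    have hki : k ≠ i := Finset.mem_erase.1 (Finset.mem_erase.1 hk).2 |>.1
    have hkj : k ≠ j := (Finset.mem_erase.1 hk).1
    simp [Function.comp, Equiv.swap_apply_of_ne_of_ne hki hkj]
  rw [htail]
  have hR : (0:ℝ) ≤ ∏ k ∈ (Finset.univ.erase i).erase j,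
      if x k then p k else 1 - p k := by
    apply Finset.prod_nonneg
    intro k _
    rcases hp k with ⟨h0, h1⟩
    split <;> linarith
  simp only [Function.comp, Equiv.swap_apply_left, Equiv.swap_apply_right, hxi, hxj]
  simp only [if_true, if_false, Bool.false_eq_true]
  rcases hp i with ⟨h0i, h1i⟩
  rcases hp j with ⟨h0j, h1j⟩
  nlinarith [hR, mul_nonneg h0j hR]

/-- If `p₁ ≥ ⋯ ≥ pₙ` and `w` is feasible with `w i < w j` for consecutive `i, j`,
then swapping the two coordinates gives a feasible solution with objective at
least as large. -/
theorem stmt_1 {n : ℕ} (p : Fin n → ℝ) (hp : ∀ i, p i ∈ Set.Icc (0:ℝ) 1)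
    (hpsort : ∀ i j : Fin n, i ≤ j → p j ≤ p i)
    (θ : ℝ) (hθ : θ ∈ Set.Ioo (0:ℝ) 1)
    (w : Fin n → ℝ) (hw : ∀ i, 0 ≤ w i) (hsum : ∑ i, w i ≤ 1)
    (i j : Fin n) (hij : (i : ℕ) + 1 = (j : ℕ)) (hlt : w i < w j) :
    (∀ k, 0 ≤ (w ∘ Equiv.swap i j) k) ∧ (∑ k, (w ∘ Equiv.swap i j) k) ≤ 1 ∧
      Obj p w θ ≤ Obj p (w ∘ Equiv.swap i j) θ := by
  have hne : i ≠ j := by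
    intro h; subst h; omega
  have hile : i ≤ j := by
    rw [Fin.le_def]; omega
  have hpij : p j ≤ p i := hpsort i j hile
  set σ := Equiv.swap i j with hσ
  refine ⟨fun k => hw _, ?_, ?_⟩
  · calc (∑ k, (w ∘ σ) k) = ∑ k, w k := Equiv.sum_comp σ w
      _ ≤ 1 := hsum
  -- the main inequality
  have key : ∀ v : Fin n → ℝ, Obj p v θ =
      ∑ x : Fin n → Bool,
        if θ ≤ ∑ k, v k * (if x k then 1 else 0) then cubeProb p x else 0 := by
    intro v; rw [Obj, Finset.sum_filter]
  rw [key, key]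
  -- equivalence on the cube given by precomposition with σ
  let e : (Fin n → Bool) ≃ (Fin n → Bool) :=
    ⟨fun x => x ∘ σ, fun x => x ∘ σ, fun x => swap_comp_self i j x,
      fun x => swap_comp_self i j x⟩
  have hSswap : ∀ x : Fin n → Bool,
      (∑ k, (w ∘ σ) k * (if x k then 1 else 0)) =
        ∑ k, w k * (if (x ∘ σ) k then 1 else 0) := by
    intro x
    calc (∑ k, (w ∘ σ) k * (if x k then 1 else 0))
        = ∑ k, w (σ k) * (if x (σ (σ k)) then 1 else 0) := by
          apply Finset.sum_congr rfl; intro k _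
          simp [hσ, Function.comp, Equiv.swap_apply_self]
      _ = ∑ k, w k * (if x (σ k) then 1 else 0) :=
          Equiv.sum_comp σ (fun k => w k * (if x (σ k) then 1 else 0))
      _ = ∑ k, w k * (if (x ∘ σ) k then 1 else 0) := rfl
  have rhs_eq : (∑ x : Fin n → Bool,
      if θ ≤ ∑ k, (w ∘ σ) k * (if x k then 1 else 0) then cubeProb p x else 0) =
      ∑ x : Fin n → Bool,
        if θ ≤ ∑ k, w k * (if x k then 1 else 0) then cubeProb p (x ∘ σ) else 0 := by
    rw [← Equiv.sum_comp e (fun x =>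
      if θ ≤ ∑ k, (w ∘ σ) k * (if x k then 1 else 0) then cubeProb p x else 0)]
    apply Finset.sum_congr rfl
    intro x _
    have : (∑ k, (w ∘ σ) k * (if (e x) k then 1 else 0)) =
        ∑ k, w k * (if x k then 1 else 0) := by
      rw [hSswap (e x)]
      congr 1
      funext k
      simp [hσ, e, Function.comp, Equiv.swap_apply_self]
    rw [this]
    rfl
  rw [rhs_eq]
  rw [← sub_nonneg, ← Finset.sum_sub_distrib]
  set F : (Fin n → Bool) → ℝ := fun x =>
    (if θ ≤ ∑ k, w k * (if x k then 1 else 0) then cubeProb p (x ∘ σ) else 0) -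
      (if θ ≤ ∑ k, w k * (if x k then 1 else 0) then cubeProb p x else 0) with hF
  show 0 ≤ ∑ x : Fin n → Bool, F x
  rw [← Finset.sum_filter_add_sum_filter_not Finset.univ (fun x => x i = x j) F]
  have hfix : ∀ x : Fin n → Bool, x i = x j → x ∘ σ = x := by
    intro x hx
    funext k
    rcases eq_or_ne k i with rfl | hki
    · simp [hσ, Function.comp, Equiv.swap_apply_left, hx]
    rcases eq_or_ne k j with rfl | hkj
    · simp [hσ, Function.comp, Equiv.swap_apply_right, hx]
    · simp [hσ, Function.comp, Equiv.swap_apply_of_ne_of_ne hki hkj]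
  have h1 : (∑ x ∈ Finset.univ.filter (fun x : Fin n → Bool => x i = x j), F x) = 0 := by
    apply Finset.sum_eq_zero
    intro x hx
    have hx' : x i = x j := (Finset.mem_filter.1 hx).2
    rw [hF]
    simp [hfix x hx']
  rw [h1, zero_add]
  rw [← Finset.sum_filter_add_sum_filter_not
    (Finset.univ.filter (fun x : Fin n → Bool => ¬ x i = x j))
    (fun x => x i = true) F]
  -- B : x i = false, x j = true ; C : x i = true, x j = false
  set C := (Finset.univ.filter (fun x : Fin n → Bool => ¬ x i = x j)).filter
    (fun x => x i = true) with hC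
  set B := (Finset.univ.filter (fun x : Fin n → Bool => ¬ x i = x j)).filter
    (fun x => ¬ x i = true) with hB
  have memB : ∀ x ∈ B, x i = false ∧ x j = true := by
    intro x hx
    rw [hB] at hx
    have h2 := (Finset.mem_filter.1 hx).2
    have h3 := (Finset.mem_filter.1 (Finset.mem_filter.1 hx).1).2
    simp only [Bool.not_eq_true] at h2
    refine ⟨h2, ?_⟩
    cases hxj : x j
    · exact absurd (h2.trans hxj.symm) h3
    · rfl
  have memC : ∀ x ∈ C, x i = true ∧ x j = false := by
    intro x hx
    rw [hC] at hx
    have h2 := (Finset.mem_filter.1 hx).2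
    have h3 := (Finset.mem_filter.1 (Finset.mem_filter.1 hx).1).2
    refine ⟨h2, ?_⟩
    cases hxj : x j
    · rfl
    · exact absurd (h2.trans hxj.symm) h3
  have hCB : (∑ x ∈ C, F x) = ∑ x ∈ B, F (x ∘ σ) := by
    apply Finset.sum_nbij' (fun x => x ∘ σ) (fun x => x ∘ σ)
    · intro x hx
      rcases memC x hx with ⟨hxi, hxj⟩
      rw [hB]
      simp only [Finset.mem_filter, Finset.mem_univ, true_and]
      constructor
      · simp [hσ, Function.comp, Equiv.swap_apply_left, Equiv.swap_apply_right, hxi, hxj]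
      · simp [hσ, Function.comp, Equiv.swap_apply_left, hxj]
    · intro x hx
      rcases memB x hx with ⟨hxi, hxj⟩
      rw [hC]
      simp only [Finset.mem_filter, Finset.mem_univ, true_and]
      constructor
      · simp [hσ, Function.comp, Equiv.swap_apply_left, Equiv.swap_apply_right, hxi, hxj]
      · simp [hσ, Function.comp, Equiv.swap_apply_left, hxj]
    · intro x _; exact swap_comp_self i j x
    · intro x _; exact swap_comp_self i j x
    · intro x hx
      rw [swap_comp_self i j x]
  rw [hCB, ← Finset.sum_add_distrib]
  apply Finset.sum_nonneg
  intro x hx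
  rcases memB x hx with ⟨hxi, hxj⟩
  -- the weighted sum decreases under the swap
  have hS : (∑ k, w k * (if (x ∘ σ) k then 1 else 0)) ≤
      ∑ k, w k * (if x k then 1 else 0) := by
    rw [← sub_nonneg, ← Finset.sum_sub_distrib]
    have : (∑ k, (w k * (if x k then 1 else 0) - w k * (if (x ∘ σ) k then 1 else 0)))
        = (w i * (if x i then 1 else 0) - w i * (if (x ∘ σ) i then 1 else 0)) +
          (w j * (if x j then 1 else 0) - w j * (if (x ∘ σ) j then 1 else 0)) := by
      apply Finset.sum_eq_add_of_mem i j (mem_univ i) (mem_univ j) hne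
      intro k _ ⟨hki, hkj⟩
      simp [hσ, Function.comp, Equiv.swap_apply_of_ne_of_ne hki hkj]
    rw [this]
    simp only [hσ, Function.comp, Equiv.swap_apply_left, Equiv.swap_apply_right, hxi, hxj]
    simp only [if_true, if_false, Bool.false_eq_true]
    linarith
  have hq : cubeProb p x ≤ cubeProb p (x ∘ σ) := cube_swap_le p hp i j hne hpij x hxi hxj
  have hcc : (x ∘ σ) ∘ σ = x := swap_comp_self i j x
  rw [hF]
  by_cases h1 : θ ≤ ∑ k, w k * (if x k then 1 else 0)
  · by_cases h2 : θ ≤ ∑ k, w k * (if (x ∘ σ) k then 1 else 0)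
    · simp only [h1, h2, if_true, hcc]
      ring_nf
      linarith [le_refl (0:ℝ)]
    · simp only [h1, h2, if_true, if_false]
      linarith
  · have h2 : ¬ θ ≤ ∑ k, w k * (if (x ∘ σ) k then 1 else 0) := fun h => h1 (h.trans hS)
    simp only [h1, h2, if_false]
    linarith
end

section
/- Let v₁ ≥ ... ≥ v_s > 0 with v_{j+1} ≤ v_j/3 for all j < s, and let X₁,...,X_s be independent Bernoulli with parameters p_i ∈ [γ, 1 − γ]. Then for every ν ∈ ℝ and every nonnegative integer k, Pr[|∑_{ℓ=1}^s v_ℓ X_ℓ − ν| ≤ k·v_s/2] ≤ (2k+1)(1 − γ)^s. -/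
open Finset

/-- auxiliary: real value of a Boolean coordinate -/
def bval : Bool → ℝ := fun b => if b then 1 else 0

theorem bval_abs_sub_le_one (a b : Bool) : |bval a - bval b| ≤ 1 := by
  cases a <;> cases b <;> simp [bval]

theorem bval_abs_sub_eq_one {a b : Bool} (h : a ≠ b) : |bval a - bval b| = 1 := by
  cases a <;> cases b <;> simp [bval] at h ⊢

/-- For geometrically decreasing positive weights and independent Bernoulli
variables with parameters in `[γ, 1-γ]`, the linear form lands within radius
`k·v_s/2` of any point `ν` with probability at most `(2k+1)(1-γ)^s`. -/
theorem stmt_8 {s : ℕ} (hs : 0 < s) (v : Fin s → ℝ)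
    (hpos : ∀ i, 0 < v i)
    (hsort : ∀ i j : Fin s, i ≤ j → v j ≤ v i)
    (hratio : ∀ i : Fin s, ∀ h : (i : ℕ) + 1 < s, v ⟨(i : ℕ) + 1, h⟩ ≤ v i / 3)
    (γ : ℝ) (hγ : 0 < γ) (p : Fin s → ℝ)
    (hp : ∀ i, p i ∈ Set.Icc γ (1 - γ)) (ν : ℝ) (k : ℕ) :
    (∑ x ∈ Finset.univ.filter
        (fun x : Fin s → Bool =>
          |(∑ ℓ, v ℓ * (if x ℓ then 1 else 0)) - ν| ≤
            k * v ⟨s - 1, Nat.sub_lt hs one_pos⟩ / 2),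
      cubeProb p x) ≤ (2 * k + 1) * (1 - γ) ^ s := by
  classical
  set last : Fin s := ⟨s - 1, Nat.sub_lt hs one_pos⟩ with hlast
  set L : (Fin s → Bool) → ℝ := fun x => ∑ ℓ, v ℓ * (if x ℓ then 1 else 0) with hLdef
  -- tail bound
  have tail : ∀ (n : ℕ) (i : Fin s), (i : ℕ) + n + 1 = s →
      ∑ ℓ ∈ Finset.Ioi i, v ℓ ≤ v i / 2 := by
    intro n
    induction n with
    | zero =>
      intro i hi
      have hempty : Finset.Ioi i = (∅ : Finset (Fin s)) := by
        ext ℓ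
        simp only [Finset.mem_Ioi, Finset.notMem_empty, iff_false, not_lt]
        have := ℓ.2
        have hle : (ℓ : ℕ) ≤ (i : ℕ) := by omega
        exact hle
      rw [hempty, Finset.sum_empty]
      have := hpos i; linarith
    | succ n ih =>
      intro i hi
      have hlt : (i : ℕ) + 1 < s := by omega
      set i' : Fin s := ⟨(i : ℕ) + 1, hlt⟩ with hi'
      have hIoi : Finset.Ioi i = insert i' (Finset.Ioi i') := by
        ext ℓ
        simp only [Finset.mem_Ioi, Finset.mem_insert, Fin.lt_def, Fin.ext_iff, hi']
        omega
      have hnotmem : i' ∉ Finset.Ioi i' := by simp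
      rw [hIoi, Finset.sum_insert hnotmem]
      have hih : ∑ ℓ ∈ Finset.Ioi i', v ℓ ≤ v i' / 2 := ih i' (by simp [hi']; omega)
      have hr : v i' ≤ v i / 3 := hratio i hlt
      linarith
  have tail' : ∀ i : Fin s, ∑ ℓ ∈ Finset.Ioi i, v ℓ ≤ v i / 2 := by
    intro i
    exact tail (s - 1 - (i : ℕ)) i (by have := i.2; omega)
  -- separation
  have sep : ∀ x y : Fin s → Bool, x ≠ y → v last / 2 ≤ |L x - L y| := by
    intro x y hxy
    have hdiff : L x - L y = ∑ ℓ, v ℓ * (bval (x ℓ) - bval (y ℓ)) := by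
      simp only [hLdef, bval, mul_sub, Finset.sum_sub_distrib]
    set D : Finset (Fin s) := Finset.univ.filter (fun ℓ => x ℓ ≠ y ℓ) with hD
    have hDne : D.Nonempty := by
      by_contra h
      apply hxy
      funext ℓ
      by_contra hne
      exact h ⟨ℓ, by simp [hD, hne]⟩
    set i0 : Fin s := D.min' hDne with hi0
    have hi0mem : i0 ∈ D := D.min'_mem hDne
    have hsum : L x - L y = ∑ ℓ ∈ D, v ℓ * (bval (x ℓ) - bval (y ℓ)) := by
      rw [hdiff]
      symm
      apply Finset.sum_subset (Finset.subset_univ D)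
      intro ℓ _ hℓ
      have : x ℓ = y ℓ := by
        by_contra hne
        exact hℓ (by simp [hD, hne])
      simp [this]
    have hsplit : L x - L y = v i0 * (bval (x i0) - bval (y i0)) +
        ∑ ℓ ∈ D.erase i0, v ℓ * (bval (x ℓ) - bval (y ℓ)) := by
      rw [hsum, ← Finset.add_sum_erase _ _ hi0mem]
    have habs_e : |bval (x i0) - bval (y i0)| = 1 := by
      have hne : x i0 ≠ y i0 := by
        have := hi0mem; simp [hD] at this; exact this
      exact bval_abs_sub_eq_one hne
    have hRbound : |∑ ℓ ∈ D.erase i0, v ℓ * (bval (x ℓ) - bval (y ℓ))| ≤ v i0 / 2 := by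
      calc |∑ ℓ ∈ D.erase i0, v ℓ * (bval (x ℓ) - bval (y ℓ))|
          ≤ ∑ ℓ ∈ D.erase i0, |v ℓ * (bval (x ℓ) - bval (y ℓ))| := Finset.abs_sum_le_sum_abs _ _
        _ ≤ ∑ ℓ ∈ D.erase i0, v ℓ := by
            apply Finset.sum_le_sum
            intro ℓ _
            rw [abs_mul, abs_of_pos (hpos ℓ)]
            have : |bval (x ℓ) - bval (y ℓ)| ≤ 1 := bval_abs_sub_le_one _ _
            nlinarith [hpos ℓ]
        _ ≤ ∑ ℓ ∈ Finset.Ioi i0, v ℓ := by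
            apply Finset.sum_le_sum_of_subset_of_nonneg
            · intro ℓ hℓ
              rw [Finset.mem_Ioi]
              rcases Finset.mem_erase.mp hℓ with ⟨hne, hmem⟩
              exact lt_of_le_of_ne (D.min'_le ℓ hmem) (Ne.symm hne)
            · intro ℓ _ _; exact (hpos ℓ).le
        _ ≤ v i0 / 2 := tail' i0
    have hvlast : v last ≤ v i0 := by
      apply hsort i0 last
      rw [Fin.le_def]
      have := i0.2
      simp [hlast]
      omega
    have hmain : v i0 / 2 ≤ |L x - L y| := by
      rw [hsplit]
      have h1 : |v i0 * (bval (x i0) - bval (y i0))| = v i0 := by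
        rw [abs_mul, habs_e, abs_of_pos (hpos i0), mul_one]
      calc v i0 / 2 = v i0 - v i0 / 2 := by ring
        _ ≤ |v i0 * (bval (x i0) - bval (y i0))| -
            |∑ ℓ ∈ D.erase i0, v ℓ * (bval (x ℓ) - bval (y ℓ))| := by
            rw [h1]; linarith
        _ ≤ |v i0 * (bval (x i0) - bval (y i0)) +
            ∑ ℓ ∈ D.erase i0, v ℓ * (bval (x ℓ) - bval (y ℓ))| := by
            have := abs_add_le (v i0 * (bval (x i0) - bval (y i0)) +
              ∑ ℓ ∈ D.erase i0, v ℓ * (bval (x ℓ) - bval (y ℓ)))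
              (-(∑ ℓ ∈ D.erase i0, v ℓ * (bval (x ℓ) - bval (y ℓ))))
            simp only [add_neg_cancel_right, abs_neg] at this
            linarith
    linarith
  -- cardinality of the filter set
  set d : ℝ := v last / 2 with hd
  have hdpos : 0 < d := by have := hpos last; simp [hd]; linarith
  set A : Finset (Fin s → Bool) := Finset.univ.filter
    (fun x : Fin s → Bool => |L x - ν| ≤ k * v last / 2) with hA
  have hmemA : ∀ x ∈ A, |L x - ν| ≤ k * d := by
    intro x hx
    have := (Finset.mem_filter.mp hx).2
    rw [hd]
    linarith [this]
  have hcard : A.card ≤ 2 * k + 1 := by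
    have hmaps : ∀ x ∈ A, (⌊(L x - (ν - k * d)) / d⌋).toNat ∈ Finset.range (2 * k + 1) := by
      intro x hx
      rw [Finset.mem_range]
      have hx' := abs_le.mp (hmemA x hx)
      have h2 : (L x - (ν - k * d)) / d ≤ 2 * k := by
        rw [div_le_iff₀ hdpos]
        nlinarith [hx'.2]
      have hfl : ⌊(L x - (ν - k * d)) / d⌋ ≤ (2 * k : ℤ) := by
        have h3 := Int.floor_le_floor h2
        have hcast : (2 * (k : ℝ)) = ((2 * k : ℤ) : ℝ) := by push_cast; ring
        rw [hcast, Int.floor_intCast] at h3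
        exact h3
      omega
    have hinj : Set.InjOn (fun x => (⌊(L x - (ν - k * d)) / d⌋).toNat) A := by
      intro x hx y hy hxy
      by_contra hne
      have hsep := sep x y hne
      set ax := (L x - (ν - k * d)) / d with hax
      set ay := (L y - (ν - k * d)) / d with hay
      have haxnn : 0 ≤ ax := by
        have := (abs_le.mp (hmemA x hx)).1
        apply div_nonneg _ hdpos.le
        linarith
      have haynn : 0 ≤ ay := by
        have := (abs_le.mp (hmemA y hy)).1
        apply div_nonneg _ hdpos.le
        linarith
      have hfx : (0 : ℤ) ≤ ⌊ax⌋ := Int.floor_nonneg.mpr haxnn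
      have hfy : (0 : ℤ) ≤ ⌊ay⌋ := Int.floor_nonneg.mpr haynn
      have hfeq : ⌊ax⌋ = ⌊ay⌋ := by
        simp only at hxy
        rw [← hax, ← hay] at hxy
        omega
      have h1 : ax - ay < 1 := by
        have := Int.lt_floor_add_one ax
        have := Int.floor_le ay
        rw [hfeq] at *
        push_cast at *
        linarith [Int.lt_floor_add_one ax, Int.floor_le ay]
      have h2 : ay - ax < 1 := by
        have := Int.lt_floor_add_one ay
        have := Int.floor_le ax
        rw [← hfeq] at *
        linarith [Int.lt_floor_add_one ay, Int.floor_le ax]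
      have habslt : |ax - ay| < 1 := abs_sub_lt_iff.mpr ⟨h1, h2⟩
      have hdiffeq : ax - ay = (L x - L y) / d := by
        rw [hax, hay]; ring
      rw [hdiffeq, abs_div, abs_of_pos hdpos, div_lt_one hdpos] at habslt
      linarith [hsep]
    have := Finset.card_le_card_of_injOn _ hmaps hinj
    simpa using this
  -- pointwise bound on cubeProb
  have hγ1 : γ ≤ 1 - γ := le_trans (hp ⟨0, hs⟩).1 (hp ⟨0, hs⟩).2
  have h1γ : 0 ≤ 1 - γ := le_trans hγ.le hγ1
  have hcube : ∀ x : Fin s → Bool, cubeProb p x ≤ (1 - γ) ^ s := by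
    intro x
    have : cubeProb p x ≤ ∏ _i : Fin s, (1 - γ) := by
      apply Finset.prod_le_prod
      · intro i _
        rcases hp i with ⟨h1, h2⟩
        split <;> linarith
      · intro i _
        rcases hp i with ⟨h1, h2⟩
        split <;> linarith
    simpa using this
  calc (∑ x ∈ A, cubeProb p x) ≤ ∑ x ∈ A, (1 - γ) ^ s :=
        Finset.sum_le_sum (fun x _ => hcube x)
    _ = A.card * (1 - γ) ^ s := by rw [Finset.sum_const, nsmul_eq_mul]
    _ ≤ (2 * k + 1) * (1 - γ) ^ s := by
        apply mul_le_mul_of_nonneg_right _ (pow_nonneg h1γ s)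
        have : (A.card : ℝ) ≤ ((2 * k + 1 : ℕ) : ℝ) := by exact_mod_cast hcard
        push_cast at this ⊢
        linarith
end
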